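/- Fix a ground set of q elements and cardinalities m_1, ..., m_d with μ = min_j m_j. The number of tuples (A_1, ..., A_d) of subsets with |A_j| = m_j whose intersection A_1 ∩ ... ∩ A_d has cardinality exactly m (for 0 ≤ m ≤ μ) equals K_m = Σ_{s=0}^{μ-m} (-1)^s · υ_{m+s} · C(m+s, m), where υ_i = C(q, i) · Π_{j=1}^d C(q-i, m_j - i). -/

import Mathlib

open Finset in
private lemma card_supersets {q : ℕ} (S : Finset (Fin q)) (i n : ℕ) (hS : S.card = i) (hin : i ≤ n) :
    (univ.filter (fun B : Finset (Fin q) => S ⊆ B ∧ B.card = n)).card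
      = (q - i).choose (n - i) := by
  have h : (univ.filter (fun B : Finset (Fin q) => S ⊆ B ∧ B.card = n)).card
        = (Finset.powersetCard (n - i) Sᶜ).card := by
      apply Finset.card_bij (fun B _ => B \ S)
      · intro B hB
        simp only [mem_filter, mem_univ, true_and] at hB
        rw [Finset.mem_powersetCard]
        refine ⟨fun x hx => ?_, ?_⟩
        · simp only [Finset.mem_sdiff] at hx
          simp [Finset.mem_compl, hx.2]
        · rw [Finset.card_sdiff_of_subset hB.1, hB.2, hS]
      · intro B1 h1 B2 h2 h
        simp only [mem_filter, mem_univ, true_and] at h1 h2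
        have := congrArg (· ∪ S) h
        simpa [Finset.sdiff_union_of_subset h1.1, Finset.sdiff_union_of_subset h2.1] using this
      · intro C hC
        rw [Finset.mem_powersetCard] at hC
        have hdisj : Disjoint C S := by
          refine Finset.disjoint_left.mpr fun x hx hxS => ?_
          have := hC.1 hx
          simp only [Finset.mem_compl] at this
          exact this hxS
        refine ⟨C ∪ S, ?_, ?_⟩
        · simp only [mem_filter, mem_univ, true_and]
          refine ⟨Finset.subset_union_right, ?_⟩
          rw [Finset.card_union_of_disjoint hdisj, hC.2, hS]
          omega
        · rw [Finset.union_sdiff_right, Finset.sdiff_eq_self_of_disjoint hdisj]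
  rw [h, Finset.card_powersetCard, Finset.card_compl, hS, Fintype.card_fin]

open Finset in
private lemma pair_count {q d : ℕ} (ms : Fin d → ℕ) (μ i : ℕ)
    (hμ2 : ∀ j, μ ≤ ms j) (hμ1 : ∃ j, ms j = μ) (hi : i ≤ μ) :
    q.choose i * ∏ j, (q - i).choose (ms j - i)
      = ∑ k ∈ Finset.range (μ + 1), k.choose i *
          (univ.filter (fun A : Fin d → Finset (Fin q) =>
            (∀ j, (A j).card = ms j) ∧ (univ.inf A).card = k)).card := by
  classical
  set P : Finset (Finset (Fin q) × (Fin d → Finset (Fin q))) :=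
    univ.filter (fun p => p.1.card = i ∧ (∀ j, (p.2 j).card = ms j) ∧ p.1 ⊆ univ.inf p.2)
    with hP
  -- Count P grouped by the first component
  have h1 : P.card = q.choose i * ∏ j, (q - i).choose (ms j - i) := by
    rw [Finset.card_eq_sum_card_fiberwise
      (f := Prod.fst) (t := Finset.powersetCard i (univ : Finset (Fin q)))
      (fun p hp => by
        simp only [hP, Finset.mem_coe, mem_filter, mem_univ, true_and] at hp
        exact Finset.mem_powersetCard_univ.mpr hp.1)]
    have hfib : ∀ S ∈ Finset.powersetCard i (univ : Finset (Fin q)),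
        (P.filter (fun p => p.1 = S)).card = ∏ j, (q - i).choose (ms j - i) := by
      intro S hS
      rw [Finset.mem_powersetCard_univ] at hS
      have : (P.filter (fun p => p.1 = S)).card
          = (Fintype.piFinset (fun j => univ.filter
              (fun B : Finset (Fin q) => S ⊆ B ∧ B.card = ms j))).card := by
        apply Finset.card_bij (fun p _ => p.2)
        · intro p hp
          simp only [hP, mem_filter, mem_univ, true_and] at hp
          obtain ⟨⟨hc, hms, hsub⟩, h1⟩ := hp
          rw [Fintype.mem_piFinset]
          intro j
          simp only [mem_filter, mem_univ, true_and]
          refine ⟨?_, hms j⟩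
          rw [← h1]
          exact hsub.trans (Finset.inf_le (mem_univ j))
        · intro p1 h1 p2 h2 h
          simp only [hP, mem_filter, mem_univ, true_and] at h1 h2
          exact Prod.ext (h1.2.trans h2.2.symm) h
        · intro A hA
          rw [Fintype.mem_piFinset] at hA
          simp only [mem_filter, mem_univ, true_and] at hA
          refine ⟨(S, A), ?_, rfl⟩
          simp only [hP, mem_filter, mem_univ, true_and]
          exact ⟨⟨hS, fun j => (hA j).2, Finset.le_inf fun j _ => (hA j).1⟩, trivial⟩
      rw [this, Fintype.card_piFinset]
      exact Finset.prod_congr rfl fun j _ =>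
        card_supersets S i (ms j) hS (hi.trans (hμ2 j))
    rw [Finset.sum_congr rfl hfib, Finset.sum_const, Finset.card_powersetCard,
      Finset.card_univ, Fintype.card_fin, smul_eq_mul]
  -- Count P grouped by the second component
  obtain ⟨j0, hj0⟩ := hμ1
  have h2 : P.card = ∑ k ∈ Finset.range (μ + 1), k.choose i *
      (univ.filter (fun A : Fin d → Finset (Fin q) =>
        (∀ j, (A j).card = ms j) ∧ (univ.inf A).card = k)).card := by
    set T : Finset (Fin d → Finset (Fin q)) :=
      univ.filter (fun A => ∀ j, (A j).card = ms j) with hT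
    have step1 : P.card = ∑ A ∈ T, (univ.inf A).card.choose i := by
      rw [Finset.card_eq_sum_card_fiberwise (f := Prod.snd) (t := T)
        (fun p hp => by
          simp only [hP, Finset.mem_coe, mem_filter, mem_univ, true_and] at hp
          simp only [hT, Finset.mem_coe, mem_filter, mem_univ, true_and]
          exact hp.2.1)]
      refine Finset.sum_congr rfl fun A hA => ?_
      have : (P.filter (fun p => p.2 = A)).card
          = (Finset.powersetCard i (univ.inf A)).card := by
        apply Finset.card_bij (fun p _ => p.1)
        · intro p hp
          simp only [hP, mem_filter, mem_univ, true_and] at hp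
          obtain ⟨⟨hc, _, hsub⟩, h1⟩ := hp
          rw [Finset.mem_powersetCard]
          exact ⟨h1 ▸ hsub, hc⟩
        · intro p1 h1 p2 h2 h
          simp only [hP, mem_filter, mem_univ, true_and] at h1 h2
          exact Prod.ext h (h1.2.trans h2.2.symm)
        · intro S hS
          rw [Finset.mem_powersetCard] at hS
          refine ⟨(S, A), ?_, rfl⟩
          simp only [hT, mem_filter, mem_univ, true_and] at hA
          simp only [hP, mem_filter, mem_univ, true_and]
          exact ⟨⟨hS.2, hA, hS.1⟩, trivial⟩
      rw [this, Finset.card_powersetCard]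
    have maps : ∀ A ∈ T, (univ.inf A).card ∈ Finset.range (μ + 1) := by
      intro A hA
      simp only [hT, mem_filter, mem_univ, true_and] at hA
      rw [Finset.mem_range, Nat.lt_succ_iff, ← hj0, ← hA j0]
      exact Finset.card_le_card (Finset.inf_le (mem_univ j0))
    rw [step1, ← Finset.sum_fiberwise_of_maps_to maps]
    refine Finset.sum_congr rfl fun k _ => ?_
    rw [Finset.sum_congr rfl (fun A hA => by
        rw [(Finset.mem_filter.mp hA).2]), Finset.sum_const, smul_eq_mul,
      mul_comm]
    congr 1
    rw [hT, Finset.filter_filter]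
  rw [← h1, h2]

open Finset in
/-- Inclusion-exclusion count: the number of tuples of subsets of prescribed
cardinalities `m_j` of a `q`-element ground set whose intersection has
cardinality exactly `m` is `K_m = Σ_{s=0}^{μ-m} (-1)^s υ_{m+s} C(m+s, m)`,
where `υ_i = C(q,i) Π_j C(q-i, m_j-i)` and `μ = min_j m_j`. -/
theorem count_intersection_card (q d : ℕ) (hd : 0 < d) (ms : Fin d → ℕ) (μ m : ℕ)
    (hμ1 : ∃ j, ms j = μ) (hμ2 : ∀ j, μ ≤ ms j) (hm : m ≤ μ) :
    (Nat.card {A : Fin d → Finset (Fin q) //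
        (∀ j, (A j).card = ms j) ∧ (Finset.univ.inf A).card = m} : ℤ)
      = ∑ s ∈ Finset.range (μ - m + 1),
          (-1 : ℤ) ^ s
            * ((q.choose (m + s)) * ∏ j, (q - (m + s)).choose (ms j - (m + s)))
            * ((m + s).choose m) := by
  classical
  obtain ⟨N, hN⟩ : ∃ N : ℕ → ℕ, ∀ k, N k = (univ.filter
      (fun A : Fin d → Finset (Fin q) =>
        (∀ j, (A j).card = ms j) ∧ (univ.inf A).card = k)).card := ⟨_, fun _ => rfl⟩
  suffices hmain : (N m : ℤ)
      = ∑ s ∈ Finset.range (μ - m + 1),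
          (-1 : ℤ) ^ s
            * ((q.choose (m + s)) * ∏ j, (q - (m + s)).choose (ms j - (m + s)))
            * ((m + s).choose m) by
    rw [show Nat.card {A : Fin d → Finset (Fin q) //
        (∀ j, (A j).card = ms j) ∧ (Finset.univ.inf A).card = m} = N m by
      rw [Nat.card_eq_fintype_card, Fintype.card_subtype, hN]]
    exact hmain
  have hυ : ∀ s ∈ Finset.range (μ - m + 1),
      (-1 : ℤ) ^ s
            * ((q.choose (m + s)) * ∏ j, (q - (m + s)).choose (ms j - (m + s)))
            * ((m + s).choose m)
        = ∑ k ∈ Finset.range (μ + 1),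
            (N k : ℤ) * ((-1 : ℤ) ^ s * (k.choose (m + s)) * ((m + s).choose m)) := by
    intro s hs
    rw [Finset.mem_range] at hs
    have h0 := pair_count (q := q) ms μ (m + s) hμ2 hμ1 (by omega)
    have h1 : ((q.choose (m + s) * ∏ j, (q - (m + s)).choose (ms j - (m + s)) : ℕ) : ℤ)
        = ((∑ k ∈ Finset.range (μ + 1), k.choose (m + s) *
            (univ.filter (fun A : Fin d → Finset (Fin q) =>
              (∀ j, (A j).card = ms j) ∧ (univ.inf A).card = k)).card : ℕ) : ℤ) := by
      exact_mod_cast congrArg Nat.cast h0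
    push_cast at h1 ⊢
    rw [h1, Finset.mul_sum, Finset.sum_mul]
    refine Finset.sum_congr rfl fun k _ => ?_
    rw [hN k]
    push_cast
    ring
  rw [Finset.sum_congr rfl hυ, Finset.sum_comm]
  have hinner : ∀ k ∈ Finset.range (μ + 1),
      ∑ s ∈ Finset.range (μ - m + 1),
        (N k : ℤ) * ((-1 : ℤ) ^ s * (k.choose (m + s)) * ((m + s).choose m))
      = (N k : ℤ) * (if k = m then 1 else 0) := by
    intro k hk
    rw [Finset.mem_range, Nat.lt_succ_iff] at hk
    rw [← Finset.mul_sum]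
    congr 1
    rcases lt_or_ge k m with hkm | hkm
    · rw [if_neg (show k ≠ m by omega)]
      refine Finset.sum_eq_zero fun s _ => ?_
      rw [Nat.choose_eq_zero_of_lt (show k < m + s by omega)]
      push_cast
      ring
    · have key : ∀ s : ℕ, (k.choose (m + s) : ℤ) * ((m + s).choose m)
          = (k.choose m : ℤ) * ((k - m).choose s) := by
        intro s
        rcases le_or_gt (m + s) k with h | h
        · have h3 := Nat.choose_mul (n := k) (k := m + s) (s := m) (Nat.le_add_right m s)
          have h2 : m + s - m = s := by omega
          rw [h2] at h3
          exact_mod_cast h3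
        · rw [Nat.choose_eq_zero_of_lt h,
            Nat.choose_eq_zero_of_lt (show k - m < s by omega)]
          push_cast
          ring
      have step : (∑ s ∈ Finset.range (μ - m + 1),
            (-1 : ℤ) ^ s * (k.choose (m + s)) * ((m + s).choose m))
          = ∑ s ∈ Finset.range (k - m + 1),
            (-1 : ℤ) ^ s * (k.choose (m + s)) * ((m + s).choose m) := by
        refine (Finset.sum_subset (Finset.range_subset_range.mpr (by omega)) ?_).symm
        intro s _ hs
        rw [Finset.mem_range, not_lt] at hs
        rw [Nat.choose_eq_zero_of_lt (show k < m + s by omega)]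
        push_cast
        ring
      rw [step]
      have step2 : (∑ s ∈ Finset.range (k - m + 1),
            (-1 : ℤ) ^ s * (k.choose (m + s)) * ((m + s).choose m))
          = (k.choose m : ℤ) * ∑ s ∈ Finset.range (k - m + 1),
              (-1 : ℤ) ^ s * ((k - m).choose s) := by
        rw [Finset.mul_sum]
        exact Finset.sum_congr rfl fun s _ => by linear_combination ((-1 : ℤ) ^ s) * key s
      rw [step2, Int.alternating_sum_range_choose]
      rcases eq_or_ne k m with h | h
      · simp [h]
      · rw [if_neg (show ¬ (k - m = 0) by omega), if_neg h, mul_zero]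
  rw [Finset.sum_congr rfl hinner]
  simp only [mul_ite, mul_one, mul_zero, Finset.sum_ite_eq', Finset.mem_range]
  rw [if_pos (by omega)]
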